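/- The satisfiability problem for LTL_{Past,m} is decidable: the predicate 'there exist a valuation V and a state a ∈ ℕ such that (V,a) ⊨ φ' is a decidable (computable) predicate on the countable set of formulas. -/

import Mathlib

/-- Formulas of the language of `LTL_{Past,m}`: atoms, negation, conjunction,
`N` (next) and `S` (since). -/
inductive Formula : Type
  | atom : ℕ → Formula
  | neg : Formula → Formula
  | conj : Formula → Formula → Formula
  | next : Formula → Formula
  | since : Formula → Formula → Formula
deriving DecidableEq

namespace Formula

/-- Implication, defined as usual from `¬` and `∧`. -/
def imp (φ ψ : Formula) : Formula := .neg (.conj φ (.neg ψ))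

/-- Disjunction, defined as usual from `¬` and `∧`. -/
def disj (φ ψ : Formula) : Formula := .neg (.conj (.neg φ) (.neg ψ))

/-- The constant true formula `⊤`, defined as usual. -/
def top : Formula := imp (.atom 0) (.atom 0)

/-- `□φ` abbreviates `¬(⊤ S ¬φ)`. -/
def box (φ : Formula) : Formula := .neg (.since top (.neg φ))

end Formula

/-- Truth of a formula at a state `a : ℕ` in a model given by a valuation
`V : ℕ → Set ℕ`, in the bounded (measure of intransitivity `m`) semantics. -/
def Sat (m : ℕ) (V : ℕ → Set ℕ) : Formula → ℕ → Prop
  | .atom i, a => a ∈ V i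
  | .neg φ, a => ¬ Sat m V φ a
  | .conj φ ψ, a => Sat m V φ a ∧ Sat m V ψ a
  | .next φ, a => Sat m V φ (a + 1)
  | .since φ ψ, a =>
      ∃ b, a ≤ b ∧ b ≤ a + m ∧ Sat m V ψ b ∧ ∀ c, a ≤ c → c < b → Sat m V φ c

/-- A formula is valid in a model `V` if it is true at every state. -/
def ValidIn (m : ℕ) (V : ℕ → Set ℕ) (φ : Formula) : Prop := ∀ a : ℕ, Sat m V φ a

/-- The logic `LTL_{Past,m}`: the set of formulas valid in every model. -/
def Logic (m : ℕ) : Set Formula := { φ | ∀ V : ℕ → Set ℕ, ValidIn m V φ }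

/-- Truth at a state in the unbounded (transitive) semantics of `LTL`. -/
def SatU (V : ℕ → Set ℕ) : Formula → ℕ → Prop
  | .atom i, a => a ∈ V i
  | .neg φ, a => ¬ SatU V φ a
  | .conj φ ψ, a => SatU V φ a ∧ SatU V ψ a
  | .next φ, a => SatU V φ (a + 1)
  | .since φ ψ, a =>
      ∃ b, a ≤ b ∧ SatU V ψ b ∧ ∀ c, a ≤ c → c < b → SatU V φ c

/-- The transitive logic `LTL`: formulas true at every state of every model in
the unbounded semantics. -/
def LogicU : Set Formula := { φ | ∀ (V : ℕ → Set ℕ) (a : ℕ), SatU V φ a }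

/-- Truth at a state in the non-uniformly non-transitive semantics, where the
reach of `S` at state `a` is bounded by `f a` for a bound function `f`. -/
def SatB (f : ℕ → ℕ) (V : ℕ → Set ℕ) : Formula → ℕ → Prop
  | .atom i, a => a ∈ V i
  | .neg φ, a => ¬ SatB f V φ a
  | .conj φ ψ, a => SatB f V φ a ∧ SatB f V ψ a
  | .next φ, a => SatB f V φ (a + 1)
  | .since φ ψ, a =>
      ∃ b, a ≤ b ∧ b ≤ f a ∧ SatB f V ψ b ∧ ∀ c, a ≤ c → c < b → SatB f V φ c

/-- The non-uniformly non-transitive logic `LTL_{Past}`: formulas true at every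
state of every model over every bound function. -/
def LogicPast : Set Formula :=
  { φ | ∀ f : ℕ → ℕ, (∀ i, i < f i) → (∀ i, f i < f (i + 1)) →
      ∀ (V : ℕ → Set ℕ) (a : ℕ), SatB f V φ a }

/-- Substitutions map atoms to formulas and extend homomorphically. -/
def substF (σ : ℕ → Formula) : Formula → Formula
  | .atom i => σ i
  | .neg φ => .neg (substF σ φ)
  | .conj φ ψ => .conj (substF σ φ) (substF σ ψ)
  | .next φ => .next (substF σ φ)
  | .since φ ψ => .since (substF σ φ) (substF σ ψ)

/-- An inference rule: a finite list of premises and a conclusion. -/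
structure Rule : Type where
  premises : List Formula
  conclusion : Formula
deriving DecidableEq

/-- A rule is valid in a model `V` if validity of all premises in `V` implies
validity of the conclusion in `V`. -/
def RuleValid (m : ℕ) (V : ℕ → Set ℕ) (r : Rule) : Prop :=
  (∀ φ ∈ r.premises, ValidIn m V φ) → ValidIn m V r.conclusion

/-- A rule is admissible in `LTL_{Past,m}` if every substitution making all
premises theorems also makes the conclusion a theorem. -/
def Admissible (m : ℕ) (r : Rule) : Prop :=
  ∀ σ : ℕ → Formula,
    (∀ φ ∈ r.premises, substF σ φ ∈ Logic m) → substF σ r.conclusion ∈ Logic m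

/-- Admissibility in the transitive logic `LTL`. -/
def AdmissibleU (r : Rule) : Prop :=
  ∀ σ : ℕ → Formula,
    (∀ φ ∈ r.premises, substF σ φ ∈ LogicU) → substF σ r.conclusion ∈ LogicU

/-- The number of symbols in a formula. -/
def sizeF : Formula → ℕ
  | .atom _ => 1
  | .neg φ => sizeF φ + 1
  | .conj φ ψ => sizeF φ + sizeF ψ + 1
  | .next φ => sizeF φ + 1
  | .since φ ψ => sizeF φ + sizeF ψ + 1

/-- The number of symbols in a rule. -/
def ruleSize (r : Rule) : ℕ :=
  (r.premises.map sizeF).sum + sizeF r.conclusion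

/-- An (injective) numerical encoding of formulas. -/
def encF : Formula → ℕ
  | .atom i => 5 * i
  | .neg φ => 5 * encF φ + 1
  | .conj φ ψ => 5 * Nat.pair (encF φ) (encF ψ) + 2
  | .next φ => 5 * encF φ + 3
  | .since φ ψ => 5 * Nat.pair (encF φ) (encF ψ) + 4

/-- An (injective) numerical encoding of rules. -/
def encR (r : Rule) : ℕ :=
  Nat.pair (Encodable.encode (r.premises.map encF)) (encF r.conclusion)

/-- `lit true φ = φ` and `lit false φ = ¬φ`. -/
def lit (t : Bool) (φ : Formula) : Formula := if t then φ else .neg φ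

/-- Conjunction of a list of formulas. -/
def bigConj : List Formula → Formula
  | [] => Formula.top
  | [φ] => φ
  | φ :: ψ :: rest => .conj φ (bigConj (ψ :: rest))

/-- Disjunction of a list of formulas. -/
def bigDisj : List Formula → Formula
  | [] => .neg Formula.top
  | [φ] => φ
  | φ :: ψ :: rest => Formula.disj φ (bigDisj (ψ :: rest))

/-- A single disjunct of a reduced normal form over variables `x_1,…,x_n`
(the atoms `0,…,n-1`): for each `i` a literal over `x_i`, for each `i` a
literal over `N x_i`, and for each pair `i ≠ k` a literal over `x_i S x_k`. -/
def disjunct (n : ℕ) (t0 t1 : Fin n → Bool) (t2 : Fin n → Fin n → Bool) : Formula :=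
  bigConj
    (((List.finRange n).map fun i => lit (t0 i) (.atom i)) ++
     ((List.finRange n).map fun i => lit (t1 i) (.next (.atom i))) ++
     ((List.finRange n).flatMap fun i =>
        ((List.finRange n).filter fun k => k != i).map fun k =>
          lit (t2 i k) (.since (.atom i) (.atom k))))

/-- A rule is in reduced normal form if it has the shape `ε / x_1`, where `ε`
is a disjunction of disjuncts as above. -/
def IsRNF (r : Rule) : Prop :=
  ∃ n : ℕ, 0 < n ∧
    ∃ ds : List ((Fin n → Bool) × (Fin n → Bool) × (Fin n → Fin n → Bool)),
      ds ≠ [] ∧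
      r.premises = [bigDisj (ds.map fun d => disjunct n d.1 d.2.1 d.2.2)] ∧
      r.conclusion = .atom 0

/-- Boolean formulas built from argument places `p_1,…,p_n, q_1,…,q_k` using
only the Boolean connectives `¬` and `∧`. -/
inductive BForm (n k : ℕ) : Type
  | pvar : Fin n → BForm n k
  | qvar : Fin k → BForm n k
  | neg : BForm n k → BForm n k
  | conj : BForm n k → BForm n k → BForm n k

/-- Substitute formulas for the argument places of a Boolean formula. -/
def BForm.substB {n k : ℕ} (α : Fin n → Formula) (δ : Fin k → Formula) :
    BForm n k → Formula
  | .pvar i => α i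
  | .qvar j => δ j
  | .neg φ => Formula.neg (BForm.substB α δ φ)
  | .conj φ ψ => Formula.conj (BForm.substB α δ φ) (BForm.substB α δ ψ)

namespace SatDec

/-- Horizon of a formula: how far forward truth at a state can depend. -/
def depth (m : ℕ) : Formula → ℕ
  | .atom _ => 0
  | .neg φ => depth m φ
  | .conj φ ψ => max (depth m φ) (depth m ψ)
  | .next φ => depth m φ + 1
  | .since φ ψ => max (depth m φ) (depth m ψ) + m

def AtomsLT (n : ℕ) : Formula → Prop
  | .atom i => i < n
  | .neg φ => AtomsLT n φ
  | .conj φ ψ => AtomsLT n φ ∧ AtomsLT n ψ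
  | .next φ => AtomsLT n φ
  | .since φ ψ => AtomsLT n φ ∧ AtomsLT n ψ

def bitv (w t : ℕ) : Bool := decide (w / 2 ^ t % 2 = 1)

def natAny (g : ℕ → Bool) : ℕ → Bool
  | 0 => false
  | K + 1 => g K || natAny g K

def natAll (g : ℕ → Bool) : ℕ → Bool
  | 0 => true
  | K + 1 => g K && natAll g K

lemma natAny_eq_true {g : ℕ → Bool} : ∀ {K}, natAny g K = true ↔ ∃ b, b < K ∧ g b = true := by
  intro K; induction K with
  | zero => simp [natAny]
  | succ K ih =>
    simp only [natAny, Bool.or_eq_true, ih]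
    constructor
    · rintro (h | ⟨b, hb, h⟩)
      · exact ⟨K, Nat.lt_succ_self K, h⟩
      · exact ⟨b, Nat.lt_succ_of_lt hb, h⟩
    · rintro ⟨b, hb, h⟩
      rcases Nat.lt_succ_iff_lt_or_eq.1 hb with hb | rfl
      · exact Or.inr ⟨b, hb, h⟩
      · exact Or.inl h

lemma natAll_eq_true {g : ℕ → Bool} : ∀ {K}, natAll g K = true ↔ ∀ b, b < K → g b = true := by
  intro K; induction K with
  | zero => simp [natAll]
  | succ K ih =>
    simp only [natAll, Bool.and_eq_true, ih]
    constructor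
    · rintro ⟨h, h'⟩ b hb
      rcases Nat.lt_succ_iff_lt_or_eq.1 hb with hb | rfl
      · exact h' b hb
      · exact h
    · intro h
      exact ⟨h K (Nat.lt_succ_self K), fun b hb => h b (Nat.lt_succ_of_lt hb)⟩

lemma natAny_congr {g g' : ℕ → Bool} : ∀ {K}, (∀ b, b < K → g b = g' b) →
    natAny g K = natAny g' K := by
  intro K; induction K with
  | zero => intro _; rfl
  | succ K ih =>
    intro h
    simp only [natAny, h K (Nat.lt_succ_self K), ih fun b hb => h b (Nat.lt_succ_of_lt hb)]

lemma natAll_congr {g g' : ℕ → Bool} : ∀ {K}, (∀ b, b < K → g b = g' b) →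
    natAll g K = natAll g' K := by
  intro K; induction K with
  | zero => intro _; rfl
  | succ K ih =>
    intro h
    simp only [natAll, h K (Nat.lt_succ_self K), ih fun b hb => h b (Nat.lt_succ_of_lt hb)]

/-- Clamped boolean evaluation of a formula against a bit-packed valuation `w`
on the window `[0, D]`. -/
def evC (m D w : ℕ) : Formula → ℕ → Bool
  | .atom i, a => bitv w (i * (D + 1) + a)
  | .neg φ, a => !(evC m D w φ a)
  | .conj φ ψ, a => evC m D w φ a && evC m D w ψ a
  | .next φ, a => if a + 1 ≤ D then evC m D w φ (a + 1) else false
  | .since φ ψ, a =>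
      natAny (fun b => decide (a ≤ b) && evC m D w ψ b &&
        natAll (fun c => !(decide (a ≤ c)) || evC m D w φ c) b) (min (a + m) D + 1)

/-- The valuation read off from the bit-packed `w`. -/
def Vw (n D w : ℕ) : ℕ → Set ℕ := fun i => {b | i < n ∧ b ≤ D ∧ bitv w (i * (D + 1) + b) = true}

end SatDec
namespace SatDec

/-- Main agreement: clamped boolean evaluation agrees with `Sat` in the model `Vw`. -/
lemma evC_iff_sat (m n D w : ℕ) : ∀ (φ : Formula) (a : ℕ), AtomsLT n φ →
    a + depth m φ ≤ D → (evC m D w φ a = true ↔ Sat m (Vw n D w) φ a)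
  | .atom i, a, hA, hD => by
    simp only [evC, Sat, Vw, Set.mem_setOf_eq]
    simp only [depth] at hD
    constructor
    · intro h; exact ⟨hA, by omega, h⟩
    · rintro ⟨-, -, h⟩; exact h
  | .neg φ, a, hA, hD => by
    simp only [evC, Sat, Bool.not_eq_true', ← evC_iff_sat m n D w φ a hA hD]
    cases evC m D w φ a <;> simp
  | .conj φ ψ, a, hA, hD => by
    simp only [depth] at hD
    simp only [evC, Sat, Bool.and_eq_true,
      evC_iff_sat m n D w φ a hA.1 (by omega), evC_iff_sat m n D w ψ a hA.2 (by omega)]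
  | .next φ, a, hA, hD => by
    simp only [depth] at hD
    simp only [evC, Sat, if_pos (show a + 1 ≤ D by omega),
      evC_iff_sat m n D w φ (a + 1) hA (by omega)]
  | .since φ ψ, a, hA, hD => by
    simp only [depth] at hD
    have hmin : min (a + m) D = a + m := by omega
    simp only [evC, Sat, hmin, natAny_eq_true]
    constructor
    · rintro ⟨b, hb, h⟩
      simp only [Bool.and_eq_true, decide_eq_true_eq, natAll_eq_true] at h
      obtain ⟨⟨hab, hψ⟩, hφ⟩ := h
      refine ⟨b, hab, by omega, (evC_iff_sat m n D w ψ b hA.2 (by omega)).1 hψ, ?_⟩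
      intro c hac hcb
      have := hφ c hcb
      simp only [Bool.or_eq_true, Bool.not_eq_true', decide_eq_false_iff_not] at this
      rcases this with h' | h'
      · omega
      · exact (evC_iff_sat m n D w φ c hA.1 (by omega)).1 h'
    · rintro ⟨b, hab, hbm, hψ, hφ⟩
      refine ⟨b, by omega, ?_⟩
      simp only [Bool.and_eq_true, decide_eq_true_eq, natAll_eq_true]
      refine ⟨⟨hab, (evC_iff_sat m n D w ψ b hA.2 (by omega)).2 hψ⟩, ?_⟩
      intro c hcb
      simp only [Bool.or_eq_true, Bool.not_eq_true', decide_eq_false_iff_not]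
      rcases Nat.lt_or_ge c a with h' | h'
      · exact Or.inl (by omega)
      · exact Or.inr ((evC_iff_sat m n D w φ c hA.1 (by omega)).2 (hφ c h' hcb))

/-- Locality: truth at `a` only depends on the valuation on relevant atoms within
the window `[0, D]`. -/
lemma sat_congr (m n D : ℕ) (V V' : ℕ → Set ℕ)
    (hV : ∀ i, i < n → ∀ b, b ≤ D → (b ∈ V i ↔ b ∈ V' i)) :
    ∀ (φ : Formula) (a : ℕ), AtomsLT n φ → a + depth m φ ≤ D →
      (Sat m V φ a ↔ Sat m V' φ a)
  | .atom i, a, hA, hD => by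
    simp only [depth] at hD
    exact hV i hA a (by omega)
  | .neg φ, a, hA, hD => by
    simp only [Sat, sat_congr m n D V V' hV φ a hA hD]
  | .conj φ ψ, a, hA, hD => by
    simp only [depth] at hD
    simp only [Sat, sat_congr m n D V V' hV φ a hA.1 (by omega),
      sat_congr m n D V V' hV ψ a hA.2 (by omega)]
  | .next φ, a, hA, hD => by
    simp only [depth] at hD
    simp only [Sat, sat_congr m n D V V' hV φ (a + 1) hA (by omega)]
  | .since φ ψ, a, hA, hD => by
    simp only [depth] at hD
    simp only [Sat]
    constructor
    · rintro ⟨b, hab, hbm, hψ, hφ⟩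
      exact ⟨b, hab, hbm,
        (sat_congr m n D V V' hV ψ b hA.2 (by omega)).1 hψ,
        fun c hac hcb => (sat_congr m n D V V' hV φ c hA.1 (by omega)).1 (hφ c hac hcb)⟩
    · rintro ⟨b, hab, hbm, hψ, hφ⟩
      exact ⟨b, hab, hbm,
        (sat_congr m n D V V' hV ψ b hA.2 (by omega)).2 hψ,
        fun c hac hcb => (sat_congr m n D V V' hV φ c hA.1 (by omega)).2 (hφ c hac hcb)⟩

def shiftV (V : ℕ → Set ℕ) (k : ℕ) : ℕ → Set ℕ := fun i => {x | x + k ∈ V i}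

lemma sat_shift (m k : ℕ) (V : ℕ → Set ℕ) : ∀ (φ : Formula) (a : ℕ),
    Sat m (shiftV V k) φ a ↔ Sat m V φ (a + k)
  | .atom i, a => Iff.rfl
  | .neg φ, a => by simp only [Sat, sat_shift m k V φ a]
  | .conj φ ψ, a => by simp only [Sat, sat_shift m k V φ a, sat_shift m k V ψ a]
  | .next φ, a => by
    simp only [Sat, sat_shift m k V φ (a + 1)]
    have h : a + 1 + k = a + k + 1 := by omega
    rw [h]
  | .since φ ψ, a => by
    simp only [Sat]
    constructor
    · rintro ⟨b, hab, hbm, hψ, hφ⟩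
      refine ⟨b + k, by omega, by omega, (sat_shift m k V ψ b).1 hψ, ?_⟩
      intro c hac hcb
      have h := (sat_shift m k V φ (c - k)).1 (hφ (c - k) (by omega) (by omega))
      have : c - k + k = c := by omega
      rwa [this] at h
    · rintro ⟨b, hab, hbm, hψ, hφ⟩
      refine ⟨b - k, by omega, by omega, ?_, ?_⟩
      · rw [sat_shift m k V ψ (b - k)]
        have : b - k + k = b := by omega
        rwa [this]
      · intro c hac hcb
        rw [sat_shift m k V φ c]
        exact hφ (c + k) (by omega) (by omega)

end SatDec
namespace SatDec

/-- Pack the first `K` values of a bit-stream into a natural number. -/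
def wOf : (ℕ → Bool) → ℕ → ℕ
  | _, 0 => 0
  | g, K + 1 => (if g 0 then 1 else 0) + 2 * wOf (fun t => g (t + 1)) K

lemma wOf_lt (g : ℕ → Bool) : ∀ K, wOf g K < 2 ^ K := by
  intro K; induction K generalizing g with
  | zero => simp [wOf]
  | succ K ih =>
    have := ih (fun t => g (t + 1))
    simp only [wOf, pow_succ]
    cases g 0 <;> simp <;> omega

lemma bitv_zero_left (t : ℕ) : bitv 0 t = false := by simp [bitv]

lemma bitv_wOf (g : ℕ → Bool) : ∀ K t, t < K → bitv (wOf g K) t = g t := by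
  intro K; induction K generalizing g with
  | zero => omega
  | succ K ih =>
    intro t ht
    cases t with
    | zero =>
      simp only [wOf, bitv, pow_zero, Nat.div_one]
      rcases Bool.dichotomy (g 0) with h | h <;> rw [h] <;> simp [Nat.add_mul_mod_self_left]
    | succ t =>
      have h2 : ((if g 0 then 1 else 0) + 2 * wOf (fun t => g (t + 1)) K) / 2 ^ (t + 1)
          = wOf (fun t => g (t + 1)) K / 2 ^ t := by
        rw [pow_succ, mul_comm (2 ^ t) 2, ← Nat.div_div_eq_div_mul]
        congr 1
        rcases Bool.dichotomy (g 0) with h | h <;> rw [h] <;> simp <;> omega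
      simp only [wOf, bitv, h2]
      exact ih (fun t => g (t + 1)) t (by omega)

lemma AtomsLT_mono {n n' : ℕ} (h : n ≤ n') : ∀ φ, AtomsLT n φ → AtomsLT n' φ
  | .atom i, hA => by simpa [AtomsLT] using lt_of_lt_of_le hA h
  | .neg φ, hA => AtomsLT_mono h φ hA
  | .conj φ ψ, hA => ⟨AtomsLT_mono h φ hA.1, AtomsLT_mono h ψ hA.2⟩
  | .next φ, hA => AtomsLT_mono h φ hA
  | .since φ ψ, hA => ⟨AtomsLT_mono h φ hA.1, AtomsLT_mono h ψ hA.2⟩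

lemma atomsLT_encF : ∀ φ, AtomsLT (encF φ + 1) φ
  | .atom i => by simp [AtomsLT, encF]; omega
  | .neg φ => AtomsLT_mono (by simp [encF]; omega) φ (atomsLT_encF φ)
  | .conj φ ψ => by
    have h1 := Nat.left_le_pair (encF φ) (encF ψ)
    have h2 := Nat.right_le_pair (encF φ) (encF ψ)
    exact ⟨AtomsLT_mono (by simp [encF]; omega) φ (atomsLT_encF φ),
      AtomsLT_mono (by simp [encF]; omega) ψ (atomsLT_encF ψ)⟩
  | .next φ => AtomsLT_mono (by simp [encF]; omega) φ (atomsLT_encF φ)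
  | .since φ ψ => by
    have h1 := Nat.left_le_pair (encF φ) (encF ψ)
    have h2 := Nat.right_le_pair (encF φ) (encF ψ)
    exact ⟨AtomsLT_mono (by simp [encF]; omega) φ (atomsLT_encF φ),
      AtomsLT_mono (by simp [encF]; omega) ψ (atomsLT_encF ψ)⟩

lemma depth_le_encF (m : ℕ) : ∀ φ, depth m φ ≤ (m + 1) * (encF φ + 1)
  | .atom i => by simp [depth]
  | .neg φ => by
    have := depth_le_encF m φ
    have h : (m + 1) * (encF φ + 1) ≤ (m + 1) * (encF (.neg φ) + 1) := by
      apply Nat.mul_le_mul_left; simp [encF]; omega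
    simp only [depth]; omega
  | .conj φ ψ => by
    have hφ := depth_le_encF m φ
    have hψ := depth_le_encF m ψ
    have h1 := Nat.left_le_pair (encF φ) (encF ψ)
    have h2 := Nat.right_le_pair (encF φ) (encF ψ)
    have hφ' : (m + 1) * (encF φ + 1) ≤ (m + 1) * (encF (.conj φ ψ) + 1) := by
      apply Nat.mul_le_mul_left; simp [encF]; omega
    have hψ' : (m + 1) * (encF ψ + 1) ≤ (m + 1) * (encF (.conj φ ψ) + 1) := by
      apply Nat.mul_le_mul_left; simp [encF]; omega
    simp only [depth]; omega
  | .next φ => by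
    have := depth_le_encF m φ
    have h : (m + 1) * (encF φ + 1) + (m + 1) ≤ (m + 1) * (encF (.next φ) + 1) := by
      rw [← Nat.mul_succ]
      apply Nat.mul_le_mul_left; simp [encF]; omega
    simp only [depth]; omega
  | .since φ ψ => by
    have hφ := depth_le_encF m φ
    have hψ := depth_le_encF m ψ
    have h1 := Nat.left_le_pair (encF φ) (encF ψ)
    have h2 := Nat.right_le_pair (encF φ) (encF ψ)
    have hφ' : (m + 1) * (encF φ + 1) + (m + 1) ≤ (m + 1) * (encF (.since φ ψ) + 1) := by
      rw [← Nat.mul_succ]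
      apply Nat.mul_le_mul_left; simp [encF]; omega
    have hψ' : (m + 1) * (encF ψ + 1) + (m + 1) ≤ (m + 1) * (encF (.since φ ψ) + 1) := by
      rw [← Nat.mul_succ]
      apply Nat.mul_le_mul_left; simp [encF]; omega
    simp only [depth]; omega


end SatDec
namespace SatDec
open Classical in
/-- Bounded-model property in bit-packed form. -/
lemma sat_iff_exists_w (m n D : ℕ) (φ : Formula) (hA : AtomsLT n φ)
    (hD : depth m φ ≤ D) :
    (∃ (V : ℕ → Set ℕ) (a : ℕ), Sat m V φ a) ↔
      ∃ w, w < 2 ^ (n * (D + 1)) ∧ evC m D w φ 0 = true := by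
  constructor
  · rintro ⟨V, a, hsat⟩
    have h0 : Sat m (shiftV V a) φ 0 := by
      rw [sat_shift]; simpa using hsat
    set g : ℕ → Bool := fun t => decide (t % (D + 1) ∈ shiftV V a (t / (D + 1))) with hg
    refine ⟨wOf g (n * (D + 1)), wOf_lt g _, ?_⟩
    rw [evC_iff_sat m n D _ φ 0 hA (by omega)]
    rw [sat_congr m n D (Vw n D (wOf g (n * (D + 1)))) (shiftV V a) ?_ φ 0 hA (by omega)]
    · exact h0
    · intro i hi b hb
      have hidx : i * (D + 1) + b < n * (D + 1) := by
        calc i * (D + 1) + b < (i + 1) * (D + 1) := by rw [Nat.succ_mul]; omega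
        _ ≤ n * (D + 1) := Nat.mul_le_mul_right _ (by omega)
      have hbit : bitv (wOf g (n * (D + 1))) (i * (D + 1) + b) = g (i * (D + 1) + b) :=
        bitv_wOf g _ _ hidx
      have hdiv : (i * (D + 1) + b) / (D + 1) = i := by
        rw [mul_comm, Nat.mul_add_div (by omega : 0 < D + 1) i b, Nat.div_eq_of_lt (by omega), Nat.add_zero]
      have hmod : (i * (D + 1) + b) % (D + 1) = b := by
        rw [mul_comm, Nat.mul_add_mod (D + 1) i b, Nat.mod_eq_of_lt (by omega)]
      simp only [Vw, Set.mem_setOf_eq, hbit]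
      simp only [hg, hdiv, hmod, decide_eq_true_eq]
      constructor
      · rintro ⟨-, -, h⟩; exact h
      · intro h; exact ⟨hi, hb, h⟩
  · rintro ⟨w, -, hev⟩
    exact ⟨Vw n D w, 0, (evC_iff_sat m n D w φ 0 hA (by omega)).1 hev⟩

end SatDec
namespace SatDec

/-- Total decoding of naturals as formulas, inverse to `encF`. -/
def decF (c : ℕ) : Formula :=
  if h0 : c % 5 = 0 then .atom (c / 5)
  else if c % 5 = 1 then .neg (decF (c / 5))
  else if c % 5 = 2 then .conj (decF (c / 5).unpair.1) (decF (c / 5).unpair.2)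
  else if c % 5 = 3 then .next (decF (c / 5))
  else .since (decF (c / 5).unpair.1) (decF (c / 5).unpair.2)
  decreasing_by
  all_goals
    have hc : 1 ≤ c := by omega
    have h5 : c / 5 < c := Nat.div_lt_self (by omega) (by omega)
    first
      | exact h5
      | exact lt_of_le_of_lt (Nat.unpair_left_le _) h5
      | exact lt_of_le_of_lt (Nat.unpair_right_le _) h5

lemma decF_mod0 {c : ℕ} (h : c % 5 = 0) : decF c = .atom (c / 5) := by
  rw [decF]; simp [h]

lemma decF_mod1 {c : ℕ} (h : c % 5 = 1) : decF c = .neg (decF (c / 5)) := by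
  rw [decF]; simp [h]

lemma decF_mod2 {c : ℕ} (h : c % 5 = 2) :
    decF c = .conj (decF (c / 5).unpair.1) (decF (c / 5).unpair.2) := by
  rw [decF]; simp [h]

lemma decF_mod3 {c : ℕ} (h : c % 5 = 3) : decF c = .next (decF (c / 5)) := by
  rw [decF]; simp [h]

lemma decF_mod4 {c : ℕ} (h : c % 5 = 4) :
    decF c = .since (decF (c / 5).unpair.1) (decF (c / 5).unpair.2) := by
  rw [decF]; simp [h]

lemma decF_encF : ∀ φ, decF (encF φ) = φ
  | .atom i => by
    have h1 : (5 * i) % 5 = 0 := by omega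
    have h2 : (5 * i) / 5 = i := by omega
    rw [show encF (.atom i) = 5 * i from rfl, decF_mod0 h1, h2]
  | .neg φ => by
    have h1 : (5 * encF φ + 1) % 5 = 1 := by omega
    have h2 : (5 * encF φ + 1) / 5 = encF φ := by omega
    rw [show encF (.neg φ) = 5 * encF φ + 1 from rfl, decF_mod1 h1, h2, decF_encF φ]
  | .conj φ ψ => by
    have h1 : (5 * Nat.pair (encF φ) (encF ψ) + 2) % 5 = 2 := by omega
    have h2 : (5 * Nat.pair (encF φ) (encF ψ) + 2) / 5 = Nat.pair (encF φ) (encF ψ) := by omega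
    rw [show encF (.conj φ ψ) = 5 * Nat.pair (encF φ) (encF ψ) + 2 from rfl, decF_mod2 h1, h2,
      Nat.unpair_pair, decF_encF φ, decF_encF ψ]
  | .next φ => by
    have h1 : (5 * encF φ + 3) % 5 = 3 := by omega
    have h2 : (5 * encF φ + 3) / 5 = encF φ := by omega
    rw [show encF (.next φ) = 5 * encF φ + 3 from rfl, decF_mod3 h1, h2, decF_encF φ]
  | .since φ ψ => by
    have h1 : (5 * Nat.pair (encF φ) (encF ψ) + 4) % 5 = 4 := by omega
    have h2 : (5 * Nat.pair (encF φ) (encF ψ) + 4) / 5 = Nat.pair (encF φ) (encF ψ) := by omega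
    rw [show encF (.since φ ψ) = 5 * Nat.pair (encF φ) (encF ψ) + 4 from rfl, decF_mod4 h1, h2,
      Nat.unpair_pair, decF_encF φ, decF_encF ψ]

end SatDec
namespace SatDec

def Kp (p : ℕ) : ℕ := (p.unpair.2 + 1) * 2 ^ (p.unpair.1 * (p.unpair.2 + 1))

/-- The full evaluation table of the formula coded by `c`, for window data `p`. -/
def TB (m p c : ℕ) : List Bool :=
  (List.range (Kp p)).map fun j =>
    evC m p.unpair.2 (j / (p.unpair.2 + 1)) (decF c) (j % (p.unpair.2 + 1))

def getB (L : List (List Bool)) (k t : ℕ) : Bool := (L.getD k []).getD t false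

/-- One step of the course-of-values recursion computing `TB`. -/
def val (m p : ℕ) (L : List (List Bool)) (j : ℕ) : Bool :=
  if L.length % 5 = 0 then
    bitv (j / (p.unpair.2 + 1)) (L.length / 5 * (p.unpair.2 + 1) + j % (p.unpair.2 + 1))
  else if L.length % 5 = 1 then !(getB L (L.length / 5) j)
  else if L.length % 5 = 2 then
    getB L (L.length / 5).unpair.1 j && getB L (L.length / 5).unpair.2 j
  else if L.length % 5 = 3 then
    (if j % (p.unpair.2 + 1) + 1 ≤ p.unpair.2 then
      getB L (L.length / 5)
        (j / (p.unpair.2 + 1) * (p.unpair.2 + 1) + (j % (p.unpair.2 + 1) + 1))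
    else false)
  else
    natAny (fun b => decide (j % (p.unpair.2 + 1) ≤ b) &&
        getB L (L.length / 5).unpair.2 (j / (p.unpair.2 + 1) * (p.unpair.2 + 1) + b) &&
        natAll (fun cc => !(decide (j % (p.unpair.2 + 1) ≤ cc)) ||
          getB L (L.length / 5).unpair.1 (j / (p.unpair.2 + 1) * (p.unpair.2 + 1) + cc)) b)
      (min (j % (p.unpair.2 + 1) + m) p.unpair.2 + 1)

def gstep (m : ℕ) (p : ℕ) (L : List (List Bool)) : Option (List Bool) :=
  some ((List.range (Kp p)).map fun j => val m p L j)

lemma idx_div (w a D : ℕ) (ha : a ≤ D) : (w * (D + 1) + a) / (D + 1) = w := by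
  rw [mul_comm, Nat.mul_add_div (by omega), Nat.div_eq_of_lt (by omega), Nat.add_zero]

lemma idx_mod (w a D : ℕ) (ha : a ≤ D) : (w * (D + 1) + a) % (D + 1) = a := by
  rw [mul_comm, Nat.mul_add_mod, Nat.mod_eq_of_lt (by omega)]

lemma idx_lt (w a D M : ℕ) (ha : a ≤ D) (hw : w < M) : w * (D + 1) + a < (D + 1) * M :=
  calc w * (D + 1) + a < (w + 1) * (D + 1) := by rw [Nat.succ_mul]; omega
  _ ≤ M * (D + 1) := Nat.mul_le_mul_right _ (by omega)
  _ = (D + 1) * M := mul_comm _ _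

lemma getB_spec (m p c k t : ℕ) (hk : k < c) (ht : t < Kp p) :
    getB ((List.range c).map (TB m p)) k t =
      evC m p.unpair.2 (t / (p.unpair.2 + 1)) (decF k) (t % (p.unpair.2 + 1)) := by
  unfold getB
  have h1 : ((List.range c).map (TB m p)).getD k [] = TB m p k := by
    rw [List.getD_eq_getElem?_getD, List.getElem?_map, List.getElem?_range hk]
    rfl
  rw [h1]
  unfold TB
  rw [List.getD_eq_getElem?_getD, List.getElem?_map, List.getElem?_range ht]
  rfl

lemma gstep_spec (m p c : ℕ) :
    gstep m p ((List.range c).map (TB m p)) = some (TB m p c) := by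
  unfold gstep
  congr 1
  conv_rhs => rw [TB]
  apply List.map_congr_left
  intro j hj
  rw [List.mem_range] at hj
  set D := p.unpair.2 with hD
  set M := 2 ^ (p.unpair.1 * (D + 1)) with hM
  have hKp : Kp p = (D + 1) * M := rfl
  have hlen : ((List.range c).map (TB m p)).length = c := by simp
  have ha : j % (D + 1) ≤ D := by
    have := Nat.mod_lt j (show 0 < D + 1 by omega); omega
  have hw : j / (D + 1) < M := Nat.div_lt_of_lt_mul (by rw [← hKp]; exact hj)
  have hj' : j / (D + 1) * (D + 1) + j % (D + 1) = j := by
    rw [mul_comm]; exact Nat.div_add_mod j (D + 1)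
  have hmod5 : c % 5 < 5 := Nat.mod_lt c (by omega)
  unfold val
  rw [hlen]
  simp only [← hD]
  rcases (show c % 5 = 0 ∨ c % 5 = 1 ∨ c % 5 = 2 ∨ c % 5 = 3 ∨ c % 5 = 4 by omega) with
    h | h | h | h | h
  · rw [if_pos h, decF_mod0 h]
    rfl
  · rw [if_neg (by omega), if_pos h, decF_mod1 h]
    rw [getB_spec m p c (c / 5) j (by omega) (by rw [hKp]; exact hj)]
    rfl
  · rw [if_neg (by omega), if_neg (by omega), if_pos h, decF_mod2 h]
    have hk1 : (c / 5).unpair.1 < c :=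
      lt_of_le_of_lt (Nat.unpair_left_le _) (Nat.div_lt_self (by omega) (by omega))
    have hk2 : (c / 5).unpair.2 < c :=
      lt_of_le_of_lt (Nat.unpair_right_le _) (Nat.div_lt_self (by omega) (by omega))
    rw [getB_spec m p c _ j hk1 (by rw [hKp]; exact hj),
      getB_spec m p c _ j hk2 (by rw [hKp]; exact hj)]
    rfl
  · rw [if_neg (by omega), if_neg (by omega), if_neg (by omega), if_pos h, decF_mod3 h]
    show _ = evC m D (j / (D + 1)) (.next (decF (c / 5))) (j % (D + 1))
    rw [show evC m D (j / (D + 1)) (.next (decF (c / 5))) (j % (D + 1)) =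
      (if j % (D + 1) + 1 ≤ D then evC m D (j / (D + 1)) (decF (c / 5)) (j % (D + 1) + 1)
        else false) from rfl]
    by_cases hle : j % (D + 1) + 1 ≤ D
    · rw [if_pos hle, if_pos hle]
      rw [getB_spec m p c (c / 5) _ (by omega)
        (by rw [hKp]; exact idx_lt _ _ _ _ (by omega) hw)]
      rw [idx_div _ _ _ (by omega), idx_mod _ _ _ (by omega)]
    · rw [if_neg hle, if_neg hle]
  · rw [if_neg (by omega), if_neg (by omega), if_neg (by omega), if_neg (by omega),
      decF_mod4 h]
    show _ = evC m D (j / (D + 1)) (.since (decF (c / 5).unpair.1) (decF (c / 5).unpair.2))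
      (j % (D + 1))
    have hk1 : (c / 5).unpair.1 < c :=
      lt_of_le_of_lt (Nat.unpair_left_le _) (Nat.div_lt_self (by omega) (by omega))
    have hk2 : (c / 5).unpair.2 < c :=
      lt_of_le_of_lt (Nat.unpair_right_le _) (Nat.div_lt_self (by omega) (by omega))
    rw [show evC m D (j / (D + 1))
        (.since (decF (c / 5).unpair.1) (decF (c / 5).unpair.2)) (j % (D + 1)) =
      natAny (fun b => decide (j % (D + 1) ≤ b) &&
          evC m D (j / (D + 1)) (decF (c / 5).unpair.2) b &&
          natAll (fun cc => !(decide (j % (D + 1) ≤ cc)) ||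
            evC m D (j / (D + 1)) (decF (c / 5).unpair.1) cc) b)
        (min (j % (D + 1) + m) D + 1) from rfl]
    apply natAny_congr
    intro b hb
    have hbD : b ≤ D := by omega
    rw [getB_spec m p c _ _ hk2 (by rw [hKp]; exact idx_lt _ _ _ _ hbD hw),
      idx_div _ _ _ hbD, idx_mod _ _ _ hbD]
    congr 1
    apply natAll_congr
    intro cc hcc
    have hccD : cc ≤ D := by omega
    rw [getB_spec m p c _ _ hk1 (by rw [hKp]; exact idx_lt _ _ _ _ hccD hw),
      idx_div _ _ _ hccD, idx_mod _ _ _ hccD]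

end SatDec
namespace SatDec

set_option maxHeartbeats 2000000

open Primrec

lemma natAny_rec (g : ℕ → Bool) : ∀ K, natAny g K =
    Nat.rec false (fun b ih => g b || ih) K := by
  intro K; induction K with
  | zero => rfl
  | succ K ih => simp only [natAny, ih]

lemma natAll_rec (g : ℕ → Bool) : ∀ K, natAll g K =
    Nat.rec true (fun b ih => g b && ih) K := by
  intro K; induction K with
  | zero => rfl
  | succ K ih => simp only [natAll, ih]

lemma primrec_natAny {α : Type} [Primcodable α] {G : α → ℕ → Bool} {K : α → ℕ}
    (hG : Primrec₂ G) (hK : Primrec K) : Primrec fun x => natAny (G x) (K x) := by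
  have h : Primrec fun x => (K x).rec (motive := fun _ => Bool) false
      (fun b ih => G x b || ih) :=
    Primrec.nat_rec' hK (const false)
      ((Primrec.or.comp (hG.comp fst (fst.comp snd)) (snd.comp snd)).to₂)
  exact h.of_eq fun x => (natAny_rec (G x) (K x)).symm

lemma primrec_natAll {α : Type} [Primcodable α] {G : α → ℕ → Bool} {K : α → ℕ}
    (hG : Primrec₂ G) (hK : Primrec K) : Primrec fun x => natAll (G x) (K x) := by
  have h : Primrec fun x => (K x).rec (motive := fun _ => Bool) true
      (fun b ih => G x b && ih) :=
    Primrec.nat_rec' hK (const true)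
      ((Primrec.and.comp (hG.comp fst (fst.comp snd)) (snd.comp snd)).to₂)
  exact h.of_eq fun x => (natAll_rec (G x) (K x)).symm

lemma primrec_pow : Primrec₂ (fun a b : ℕ => a ^ b) :=
  Primrec₂.unpaired'.1 Nat.Primrec.pow

lemma primrec_bitv : Primrec₂ bitv := by
  have h : Primrec fun q : ℕ × ℕ => q.1 / 2 ^ q.2 % 2 :=
    nat_mod.comp (nat_div.comp fst (primrec_pow.comp (const 2) snd)) (const 2)
  exact (Primrec.eq.comp h (const 1)).decide.to₂

lemma primrec_getB {α : Type} [Primcodable α] {L : α → List (List Bool)} {k t : α → ℕ}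
    (hL : Primrec L) (hk : Primrec k) (ht : Primrec t) :
    Primrec fun x => getB (L x) (k x) (t x) :=
  (list_getD false).comp ((list_getD ([] : List Bool)).comp hL hk) ht

lemma primrec_val (m : ℕ) :
    Primrec fun x : ℕ × List (List Bool) × ℕ => val m x.1 x.2.1 x.2.2 := by
  have hp : Primrec fun x : ℕ × List (List Bool) × ℕ => x.1 := fst
  have hL : Primrec fun x : ℕ × List (List Bool) × ℕ => x.2.1 := fst.comp snd
  have hj : Primrec fun x : ℕ × List (List Bool) × ℕ => x.2.2 := snd.comp snd
  have hD : Primrec fun x : ℕ × List (List Bool) × ℕ => x.1.unpair.2 :=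
    snd.comp (unpair.comp hp)
  have hD1 : Primrec fun x : ℕ × List (List Bool) × ℕ => x.1.unpair.2 + 1 := succ.comp hD
  have hw : Primrec fun x : ℕ × List (List Bool) × ℕ => x.2.2 / (x.1.unpair.2 + 1) :=
    nat_div.comp hj hD1
  have ha : Primrec fun x : ℕ × List (List Bool) × ℕ => x.2.2 % (x.1.unpair.2 + 1) :=
    nat_mod.comp hj hD1
  have hc : Primrec fun x : ℕ × List (List Bool) × ℕ => x.2.1.length := list_length.comp hL
  have hc5 : Primrec fun x : ℕ × List (List Bool) × ℕ => x.2.1.length / 5 :=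
    nat_div.comp hc (const 5)
  have hcm : Primrec fun x : ℕ × List (List Bool) × ℕ => x.2.1.length % 5 :=
    nat_mod.comp hc (const 5)
  have hq1 : Primrec fun x : ℕ × List (List Bool) × ℕ => (x.2.1.length / 5).unpair.1 :=
    fst.comp (unpair.comp hc5)
  have hq2 : Primrec fun x : ℕ × List (List Bool) × ℕ => (x.2.1.length / 5).unpair.2 :=
    snd.comp (unpair.comp hc5)
  -- branch 0
  have hb0 : Primrec fun x : ℕ × List (List Bool) × ℕ =>
      bitv (x.2.2 / (x.1.unpair.2 + 1))
        (x.2.1.length / 5 * (x.1.unpair.2 + 1) + x.2.2 % (x.1.unpair.2 + 1)) :=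
    primrec_bitv.comp hw (nat_add.comp (nat_mul.comp hc5 hD1) ha)
  -- branch 1
  have hb1 : Primrec fun x : ℕ × List (List Bool) × ℕ =>
      !(getB x.2.1 (x.2.1.length / 5) x.2.2) :=
    Primrec.not.comp (primrec_getB hL hc5 hj)
  -- branch 2
  have hb2 : Primrec fun x : ℕ × List (List Bool) × ℕ =>
      (getB x.2.1 (x.2.1.length / 5).unpair.1 x.2.2 &&
        getB x.2.1 (x.2.1.length / 5).unpair.2 x.2.2) :=
    Primrec.and.comp (primrec_getB hL hq1 hj) (primrec_getB hL hq2 hj)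
  -- branch 3
  have hb3 : Primrec fun x : ℕ × List (List Bool) × ℕ =>
      (if x.2.2 % (x.1.unpair.2 + 1) + 1 ≤ x.1.unpair.2 then
        getB x.2.1 (x.2.1.length / 5)
          (x.2.2 / (x.1.unpair.2 + 1) * (x.1.unpair.2 + 1) + (x.2.2 % (x.1.unpair.2 + 1) + 1))
      else false) :=
    Primrec.ite (nat_le.comp (succ.comp ha) hD)
      (primrec_getB hL hc5 (nat_add.comp (nat_mul.comp hw hD1) (succ.comp ha)))
      (const false)
  -- branch 4
  have hInner : Primrec fun y : (ℕ × List (List Bool) × ℕ) × ℕ =>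
      natAll (fun cc => !(decide (y.1.2.2 % (y.1.1.unpair.2 + 1) ≤ cc)) ||
        getB y.1.2.1 (y.1.2.1.length / 5).unpair.1
          (y.1.2.2 / (y.1.1.unpair.2 + 1) * (y.1.1.unpair.2 + 1) + cc)) y.2 := by
    refine primrec_natAll ?_ snd
    unfold Primrec₂
    beta_reduce
    exact Primrec.or.comp
      (Primrec.not.comp ((nat_le.comp (ha.comp (fst.comp fst)) snd).decide))
      (primrec_getB (hL.comp (fst.comp fst)) (hq1.comp (fst.comp fst))
        (nat_add.comp (nat_mul.comp (hw.comp (fst.comp fst)) (hD1.comp (fst.comp fst))) snd))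
  have hb4 : Primrec fun x : ℕ × List (List Bool) × ℕ =>
      natAny (fun b => decide (x.2.2 % (x.1.unpair.2 + 1) ≤ b) &&
          getB x.2.1 (x.2.1.length / 5).unpair.2
            (x.2.2 / (x.1.unpair.2 + 1) * (x.1.unpair.2 + 1) + b) &&
          natAll (fun cc => !(decide (x.2.2 % (x.1.unpair.2 + 1) ≤ cc)) ||
            getB x.2.1 (x.2.1.length / 5).unpair.1
              (x.2.2 / (x.1.unpair.2 + 1) * (x.1.unpair.2 + 1) + cc)) b)
        (min (x.2.2 % (x.1.unpair.2 + 1) + m) x.1.unpair.2 + 1) := by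
    refine primrec_natAny ?_ (succ.comp (nat_min.comp (nat_add.comp ha (const m)) hD))
    unfold Primrec₂
    beta_reduce
    exact Primrec.and.comp
      (Primrec.and.comp
        (nat_le.comp (ha.comp fst) snd).decide
        (primrec_getB (hL.comp fst) (hq2.comp fst)
          (nat_add.comp (nat_mul.comp (hw.comp fst) (hD1.comp fst)) snd)))
      hInner
  unfold val
  exact Primrec.ite (Primrec.eq.comp hcm (const 0)) hb0
    (Primrec.ite (Primrec.eq.comp hcm (const 1)) hb1
      (Primrec.ite (Primrec.eq.comp hcm (const 2)) hb2
        (Primrec.ite (Primrec.eq.comp hcm (const 3)) hb3 hb4)))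

lemma primrec_Kp : Primrec Kp := by
  have h2 : Primrec fun p : ℕ => p.unpair.2 + 1 := succ.comp (snd.comp unpair)
  exact nat_mul.comp h2
    (primrec_pow.comp (const 2) (nat_mul.comp (fst.comp unpair) h2))

lemma primrec_TB (m : ℕ) : Primrec₂ (TB m) := by
  refine Primrec.nat_strong_rec (TB m) (g := gstep m) ?_ (fun p c => gstep_spec m p c)
  have hmap : Primrec fun y : ℕ × List (List Bool) =>
      (List.range (Kp y.1)).map fun j => val m y.1 y.2 j := by
    refine list_map (list_range.comp (primrec_Kp.comp fst)) ?_
    unfold Primrec₂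
    beta_reduce
    exact (primrec_val m).comp (Primrec.pair (fst.comp fst)
      (Primrec.pair (snd.comp fst) snd))
  unfold Primrec₂
  beta_reduce
  exact option_some.comp hmap

/-- The decision function for satisfiability, on codes of formulas. -/
def fdec (m : ℕ) (c : ℕ) : Bool :=
  natAny (fun w =>
      (TB m (Nat.pair (c + 1) ((m + 1) * (c + 1))) c).getD (w * ((m + 1) * (c + 1) + 1)) false)
    (2 ^ ((c + 1) * ((m + 1) * (c + 1) + 1)))

lemma primrec_fdec (m : ℕ) : Primrec (fdec m) := by
  unfold fdec
  apply primrec_natAny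
  · unfold Primrec₂
    exact (list_getD false).comp
      ((primrec_TB m).comp
        (Primrec₂.natPair.comp (succ.comp fst)
          (nat_mul.comp (const (m + 1)) (succ.comp fst))) fst)
      (nat_mul.comp snd
        (succ.comp (nat_mul.comp (const (m + 1)) (succ.comp fst))))
  · exact primrec_pow.comp (const 2)
      (nat_mul.comp (succ.comp Primrec.id)
        (succ.comp (nat_mul.comp (const (m + 1)) (succ.comp Primrec.id))))

end SatDec
namespace SatDec

lemma TB_getD (m p c t : ℕ) (ht : t < Kp p) :
    (TB m p c).getD t false =
      evC m p.unpair.2 (t / (p.unpair.2 + 1)) (decF c) (t % (p.unpair.2 + 1)) := by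
  unfold TB
  rw [List.getD_eq_getElem?_getD, List.getElem?_map, List.getElem?_range ht]
  rfl

lemma fdec_spec (m : ℕ) (φ : Formula) :
    fdec m (encF φ) = true ↔ ∃ (V : ℕ → Set ℕ) (a : ℕ), Sat m V φ a := by
  have hup : (Nat.pair (encF φ + 1) ((m + 1) * (encF φ + 1))).unpair
      = (encF φ + 1, (m + 1) * (encF φ + 1)) := Nat.unpair_pair _ _
  have hKp : Kp (Nat.pair (encF φ + 1) ((m + 1) * (encF φ + 1)))
      = ((m + 1) * (encF φ + 1) + 1) *
        2 ^ ((encF φ + 1) * ((m + 1) * (encF φ + 1) + 1)) := by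
    unfold Kp; rw [hup]
  have key : ∀ w, w < 2 ^ ((encF φ + 1) * ((m + 1) * (encF φ + 1) + 1)) →
      (TB m (Nat.pair (encF φ + 1) ((m + 1) * (encF φ + 1))) (encF φ)).getD
          (w * ((m + 1) * (encF φ + 1) + 1)) false
        = evC m ((m + 1) * (encF φ + 1)) w φ 0 := by
    intro w hw
    have hlt : w * ((m + 1) * (encF φ + 1) + 1)
        < Kp (Nat.pair (encF φ + 1) ((m + 1) * (encF φ + 1))) := by
      have h0 := idx_lt w 0 ((m + 1) * (encF φ + 1))
        (2 ^ ((encF φ + 1) * ((m + 1) * (encF φ + 1) + 1))) (by omega) hw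
      rw [hKp]
      omega
    rw [TB_getD m _ _ _ hlt, hup]
    have h1 : w * ((m + 1) * (encF φ + 1) + 1) / ((m + 1) * (encF φ + 1) + 1) = w := by
      have := idx_div w 0 ((m + 1) * (encF φ + 1)) (by omega)
      simpa using this
    have h2 : w * ((m + 1) * (encF φ + 1) + 1) % ((m + 1) * (encF φ + 1) + 1) = 0 := by
      have := idx_mod w 0 ((m + 1) * (encF φ + 1)) (by omega)
      simpa using this
    rw [h1, h2, decF_encF]
  rw [sat_iff_exists_w m (encF φ + 1) ((m + 1) * (encF φ + 1)) φ
    (atomsLT_encF φ) (depth_le_encF m φ)]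
  unfold fdec
  rw [natAny_eq_true]
  constructor
  · rintro ⟨w, hw, hv⟩
    exact ⟨w, hw, by rw [← key w hw]; exact hv⟩
  · rintro ⟨w, hw, hv⟩
    exact ⟨w, hw, by rw [key w hw]; exact hv⟩

end SatDec
/-- the satisfiability problem for `LTL_{Past,m}` is decidable:
satisfiability is a computable predicate on (codes of) formulas. -/
theorem satisfiability_decidable (m : ℕ) (hm : 1 ≤ m) :
    ∃ f : ℕ → Bool, Computable f ∧
      ∀ φ : Formula,
        ((∃ (V : ℕ → Set ℕ) (a : ℕ), Sat m V φ a) ↔ f (encF φ) = true) :=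
  ⟨SatDec.fdec m, (SatDec.primrec_fdec m).to_comp,
    fun φ => (SatDec.fdec_spec m φ).symm⟩
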